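/- There exist positive constants c, C such that for all N ≥ 4, c·N² log N ≤ Σ_{p=1}^{N-1} Σ_{q=1}^{N-1} (1 - cos(pπ/(2N))·cos(qπ/(2N)))⁻¹ ≤ C·N² log N. -/

import Mathlib

open Real

lemma cross_bounds {a b : ℝ} (ha : 0 ≤ a) (ha' : a ≤ π/2) (hb : 0 ≤ b) (hb' : b ≤ π/2) :
    (a^2+b^2)/π^2 ≤ 1 - Real.cos a * Real.cos b ∧
    1 - Real.cos a * Real.cos b ≤ (a^2+b^2)/2 := by
  have hpi := Real.pi_pos
  have hca : 0 ≤ Real.cos a := Real.cos_nonneg_of_mem_Icc ⟨by linarith, ha'⟩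
  have hcb : 0 ≤ Real.cos b := Real.cos_nonneg_of_mem_Icc ⟨by linarith, hb'⟩
  have hca1 : Real.cos a ≤ 1 := Real.cos_le_one a
  have hcb1 : Real.cos b ≤ 1 := Real.cos_le_one b
  have hu_a : Real.cos a ≤ 1 - 2/π^2 * a^2 :=
    Real.cos_le_one_sub_mul_cos_sq (by rw [abs_of_nonneg ha]; linarith)
  have hu_b : Real.cos b ≤ 1 - 2/π^2 * b^2 :=
    Real.cos_le_one_sub_mul_cos_sq (by rw [abs_of_nonneg hb]; linarith)
  have hl_a : 1 - a^2/2 ≤ Real.cos a := Real.one_sub_sq_div_two_le_cos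
  have hl_b : 1 - b^2/2 ≤ Real.cos b := Real.one_sub_sq_div_two_le_cos
  constructor
  · have h1 : 1 - Real.cos a ≤ 1 - Real.cos a * Real.cos b := by nlinarith
    have h2 : 1 - Real.cos b ≤ 1 - Real.cos a * Real.cos b := by nlinarith
    have hpi2 : 0 < π^2 := by positivity
    have ha2 : 2*a^2 ≤ (1 - Real.cos a) * π^2 := by
      have h := mul_le_mul_of_nonneg_right (show 2/π^2 * a^2 ≤ 1 - Real.cos a by linarith) hpi2.le
      calc 2*a^2 = 2/π^2 * a^2 * π^2 := by field_simp
        _ ≤ _ := h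
    have hb2 : 2*b^2 ≤ (1 - Real.cos b) * π^2 := by
      have h := mul_le_mul_of_nonneg_right (show 2/π^2 * b^2 ≤ 1 - Real.cos b by linarith) hpi2.le
      calc 2*b^2 = 2/π^2 * b^2 * π^2 := by field_simp
        _ ≤ _ := h
    rw [div_le_iff₀ hpi2]
    have h1' := mul_le_mul_of_nonneg_right h1 hpi2.le
    have h2' := mul_le_mul_of_nonneg_right h2 hpi2.le
    nlinarith
  · nlinarith

lemma sum_inv_sq_le {N p : ℕ} (h1 : 1 ≤ p) (h2 : p < N) :
    ∑ q ∈ Finset.Ico 1 N, ((p:ℝ)^2+(q:ℝ)^2)⁻¹ ≤ 2/p := by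
  have hp0 : (1:ℝ) ≤ (p:ℝ) := by exact_mod_cast h1
  have hpR : (0:ℝ) < (p:ℝ) := by linarith
  have hsplit : ∑ q ∈ Finset.Ico 1 (p+1), ((p:ℝ)^2+(q:ℝ)^2)⁻¹
      + ∑ q ∈ Finset.Ico (p+1) N, ((p:ℝ)^2+(q:ℝ)^2)⁻¹
      = ∑ q ∈ Finset.Ico 1 N, ((p:ℝ)^2+(q:ℝ)^2)⁻¹ :=
    Finset.sum_Ico_consecutive _ (by omega) (by omega)
  have hfirst : ∑ q ∈ Finset.Ico 1 (p+1), ((p:ℝ)^2+(q:ℝ)^2)⁻¹ ≤ 1/p := by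
    calc ∑ q ∈ Finset.Ico 1 (p+1), ((p:ℝ)^2+(q:ℝ)^2)⁻¹
        ≤ ∑ q ∈ Finset.Ico 1 (p+1), ((p:ℝ)^2)⁻¹ := by
          refine Finset.sum_le_sum fun q _ => ?_
          apply inv_anti₀ (by positivity)
          nlinarith [sq_nonneg (q:ℝ)]
      _ = (p:ℝ) * ((p:ℝ)^2)⁻¹ := by
          rw [Finset.sum_const, Nat.card_Ico]
          simp [nsmul_eq_mul]
      _ = 1/p := by field_simp
  have hsecond : ∑ q ∈ Finset.Ico (p+1) N, ((p:ℝ)^2+(q:ℝ)^2)⁻¹ ≤ 1/p := by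
    set f : ℕ → ℝ := fun q => ((q:ℝ)-1)⁻¹ with hf
    have hstep : ∀ q ∈ Finset.Ico (p+1) N, ((p:ℝ)^2+(q:ℝ)^2)⁻¹ ≤ f q - f (q+1) := by
      intro q hq
      rw [Finset.mem_Ico] at hq
      have hq2 : 2 ≤ q := by omega
      have hqR : (2:ℝ) ≤ (q:ℝ) := by exact_mod_cast hq2
      have heq : f q - f (q+1) = (((q:ℝ)-1)*q)⁻¹ := by
        simp only [hf]
        push_cast
        rw [inv_sub_inv (by linarith) (by linarith)]
        ring_nf
      rw [heq]
      apply inv_anti₀ (by nlinarith)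
      nlinarith [sq_nonneg (p:ℝ)]
    have htel : ∑ q ∈ Finset.Ico (p+1) N, (f q - f (q+1)) = f (p+1) - f N := by
      have h := Finset.sum_range_sub' (fun i => f (p+1+i)) (N-(p+1))
      simp only [Nat.add_zero] at h
      rw [show p+1+(N-(p+1)) = N from by omega] at h
      rw [Finset.sum_Ico_eq_sum_range, ← h]
      exact Finset.sum_congr rfl fun k _ => rfl
    calc ∑ q ∈ Finset.Ico (p+1) N, ((p:ℝ)^2+(q:ℝ)^2)⁻¹
        ≤ ∑ q ∈ Finset.Ico (p+1) N, (f q - f (q+1)) := Finset.sum_le_sum hstep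
      _ = f (p+1) - f N := htel
      _ ≤ f (p+1) := by
          have h1N : (1:ℝ) ≤ (N:ℝ) := by exact_mod_cast Nat.one_le_of_lt h2
          have : 0 ≤ f N := by
            simp only [hf]
            exact inv_nonneg.mpr (by linarith)
          linarith
      _ = 1/p := by simp only [hf]; push_cast; rw [one_div]; ring_nf
  rw [← hsplit, show (2:ℝ)/p = 1/p + 1/p from by ring]
  exact add_le_add hfirst hsecond

lemma le_sum_inv_sq {N p : ℕ} (h1 : 1 ≤ p) (h2 : p < N) :
    (2*(p:ℝ))⁻¹ ≤ ∑ q ∈ Finset.Ico 1 N, ((p:ℝ)^2+(q:ℝ)^2)⁻¹ := by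
  have hp0 : (1:ℝ) ≤ (p:ℝ) := by exact_mod_cast h1
  have hpR : (0:ℝ) < (p:ℝ) := by linarith
  calc (2*(p:ℝ))⁻¹ = (p:ℝ) * (2*(p:ℝ)^2)⁻¹ := by field_simp
    _ = ∑ q ∈ Finset.Ico 1 (p+1), (2*(p:ℝ)^2)⁻¹ := by
        rw [Finset.sum_const, Nat.card_Ico]
        simp [nsmul_eq_mul]
    _ ≤ ∑ q ∈ Finset.Ico 1 (p+1), ((p:ℝ)^2+(q:ℝ)^2)⁻¹ := by
        refine Finset.sum_le_sum fun q hq => ?_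
        rw [Finset.mem_Ico] at hq
        have hqp : (q:ℝ) ≤ (p:ℝ) := by exact_mod_cast Nat.lt_succ_iff.mp hq.2
        have hq1 : (1:ℝ) ≤ (q:ℝ) := by exact_mod_cast hq.1
        apply inv_anti₀ (by positivity)
        nlinarith
    _ ≤ ∑ q ∈ Finset.Ico 1 N, ((p:ℝ)^2+(q:ℝ)^2)⁻¹ := by
        apply Finset.sum_le_sum_of_subset_of_nonneg
        · exact Finset.Ico_subset_Ico le_rfl h2
        · intro q hq _
          have hq1 : 1 ≤ q := (Finset.mem_Ico.mp hq).1
          have : (1:ℝ) ≤ (q:ℝ) := by exact_mod_cast hq1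
          positivity

lemma sum_inv_eq_harmonic {N : ℕ} (h : 1 ≤ N) :
    ∑ p ∈ Finset.Ico 1 N, ((p:ℝ))⁻¹ = (harmonic (N-1) : ℝ) := by
  rw [Finset.sum_Ico_eq_sum_range]
  simp only [harmonic]
  push_cast
  exact Finset.sum_congr rfl fun i _ => by rw [add_comm]

theorem torus_sum_order :
    ∃ c C : ℝ, 0 < c ∧ 0 < C ∧ ∀ N : ℕ, 4 ≤ N →
      c * (N : ℝ)^2 * Real.log N ≤
        ∑ p ∈ Finset.Ico 1 N, ∑ q ∈ Finset.Ico 1 N,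
          (1 - Real.cos (p * π / (2 * N)) * Real.cos (q * π / (2 * N)))⁻¹ ∧
      ∑ p ∈ Finset.Ico 1 N, ∑ q ∈ Finset.Ico 1 N,
          (1 - Real.cos (p * π / (2 * N)) * Real.cos (q * π / (2 * N)))⁻¹
        ≤ C * (N : ℝ)^2 * Real.log N := by
  have hpi := Real.pi_pos
  refine ⟨4/π^2, 16, by positivity, by norm_num, fun N hN => ?_⟩
  have hN0 : 0 < N := by omega
  have hNR : (4:ℝ) ≤ (N:ℝ) := by exact_mod_cast hN
  have hNpos : (0:ℝ) < (N:ℝ) := by linarith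
  have hlog1 : 1 ≤ Real.log N := by
    rw [Real.le_log_iff_exp_le (by linarith)]
    have := Real.exp_one_lt_d9
    linarith
  -- harmonic bounds
  have hH1 : Real.log N ≤ (harmonic (N-1) : ℝ) := by
    have h := log_add_one_le_harmonic (N-1)
    rwa [show (N-1)+1 = N from by omega] at h
  have hH2 : (harmonic (N-1) : ℝ) ≤ 2 * Real.log N := by
    have h := harmonic_le_one_add_log (N-1)
    have hcast : ((N-1:ℕ):ℝ) ≤ (N:ℝ) := by exact_mod_cast Nat.sub_le N 1
    have hpos : (0:ℝ) < ((N-1:ℕ):ℝ) := by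
      have : 3 ≤ N - 1 := by omega
      have : (3:ℝ) ≤ ((N-1:ℕ):ℝ) := by exact_mod_cast this
      linarith
    have hlog : Real.log ((N-1:ℕ):ℝ) ≤ Real.log N := Real.log_le_log hpos hcast
    linarith
  -- per-term bounds
  have hterm : ∀ p ∈ Finset.Ico 1 N, ∀ q ∈ Finset.Ico 1 N,
      (8*(N:ℝ)^2/π^2) * ((p:ℝ)^2+(q:ℝ)^2)⁻¹ ≤
        (1 - Real.cos (p * π / (2 * N)) * Real.cos (q * π / (2 * N)))⁻¹ ∧
      (1 - Real.cos (p * π / (2 * N)) * Real.cos (q * π / (2 * N)))⁻¹ ≤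
        4*(N:ℝ)^2 * ((p:ℝ)^2+(q:ℝ)^2)⁻¹ := by
    intro p hp q hq
    rw [Finset.mem_Ico] at hp hq
    have hp1 : (1:ℝ) ≤ (p:ℝ) := by exact_mod_cast hp.1
    have hq1 : (1:ℝ) ≤ (q:ℝ) := by exact_mod_cast hq.1
    have hpN : (p:ℝ) ≤ (N:ℝ) := by exact_mod_cast hp.2.le
    have hqN : (q:ℝ) ≤ (N:ℝ) := by exact_mod_cast hq.2.le
    set a := (p:ℝ) * π / (2 * N) with hadef
    set b := (q:ℝ) * π / (2 * N) with hbdef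
    have ha : 0 ≤ a := by positivity
    have hb : 0 ≤ b := by positivity
    have ha' : a ≤ π/2 := by
      rw [hadef, div_le_div_iff₀ (by positivity) two_pos]
      nlinarith
    have hb' : b ≤ π/2 := by
      rw [hbdef, div_le_div_iff₀ (by positivity) two_pos]
      nlinarith
    obtain ⟨hlo, hhi⟩ := cross_bounds ha ha' hb hb'
    have hsq : a^2 + b^2 = ((p:ℝ)^2+(q:ℝ)^2) * (π^2/(4*(N:ℝ)^2)) := by
      rw [hadef, hbdef]; field_simp; ring
    have hpq : (0:ℝ) < (p:ℝ)^2+(q:ℝ)^2 := by nlinarith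
    have habpos : (0:ℝ) < a^2+b^2 := by
      rw [hsq]; positivity
    constructor
    · have h1 : (8*(N:ℝ)^2/π^2) * ((p:ℝ)^2+(q:ℝ)^2)⁻¹ = ((a^2+b^2)/2)⁻¹ := by
        rw [hsq]; field_simp; ring
      rw [h1]
      apply inv_anti₀ (lt_of_lt_of_le (by positivity) hlo) hhi
    · have h1 : ((a^2+b^2)/π^2)⁻¹ = 4*(N:ℝ)^2 * ((p:ℝ)^2+(q:ℝ)^2)⁻¹ := by
        rw [hsq]; field_simp
      rw [← h1]
      exact inv_anti₀ (by positivity) hlo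
  constructor
  · -- lower bound
    calc 4/π^2 * (N:ℝ)^2 * Real.log N
        ≤ 4/π^2 * (N:ℝ)^2 * (harmonic (N-1) : ℝ) := by
          apply mul_le_mul_of_nonneg_left hH1 (by positivity)
      _ = ∑ p ∈ Finset.Ico 1 N, (8*(N:ℝ)^2/π^2) * (2*(p:ℝ))⁻¹ := by
          rw [show ∀ x:ℝ, 4/π^2 * (N:ℝ)^2 * x = (4*(N:ℝ)^2/π^2) * x from fun x => by ring]
          rw [← sum_inv_eq_harmonic (by omega), Finset.mul_sum]
          refine Finset.sum_congr rfl fun p hp => ?_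
          have hp1 : (1:ℝ) ≤ (p:ℝ) := by exact_mod_cast (Finset.mem_Ico.mp hp).1
          rw [mul_inv]
          ring
      _ ≤ ∑ p ∈ Finset.Ico 1 N, (8*(N:ℝ)^2/π^2) * ∑ q ∈ Finset.Ico 1 N, ((p:ℝ)^2+(q:ℝ)^2)⁻¹ := by
          refine Finset.sum_le_sum fun p hp => ?_
          rw [Finset.mem_Ico] at hp
          exact mul_le_mul_of_nonneg_left (le_sum_inv_sq hp.1 hp.2) (by positivity)
      _ = ∑ p ∈ Finset.Ico 1 N, ∑ q ∈ Finset.Ico 1 N,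
            (8*(N:ℝ)^2/π^2) * ((p:ℝ)^2+(q:ℝ)^2)⁻¹ := by
          simp_rw [Finset.mul_sum]
      _ ≤ _ := by
          refine Finset.sum_le_sum fun p hp => Finset.sum_le_sum fun q hq => ?_
          exact (hterm p hp q hq).1
  · -- upper bound
    calc ∑ p ∈ Finset.Ico 1 N, ∑ q ∈ Finset.Ico 1 N,
            (1 - Real.cos (p * π / (2 * N)) * Real.cos (q * π / (2 * N)))⁻¹
        ≤ ∑ p ∈ Finset.Ico 1 N, ∑ q ∈ Finset.Ico 1 N,
            4*(N:ℝ)^2 * ((p:ℝ)^2+(q:ℝ)^2)⁻¹ := by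
          refine Finset.sum_le_sum fun p hp => Finset.sum_le_sum fun q hq => ?_
          exact (hterm p hp q hq).2
      _ = ∑ p ∈ Finset.Ico 1 N, 4*(N:ℝ)^2 * ∑ q ∈ Finset.Ico 1 N, ((p:ℝ)^2+(q:ℝ)^2)⁻¹ := by
          simp_rw [Finset.mul_sum]
      _ ≤ ∑ p ∈ Finset.Ico 1 N, 4*(N:ℝ)^2 * (2/(p:ℝ)) := by
          refine Finset.sum_le_sum fun p hp => ?_
          rw [Finset.mem_Ico] at hp
          exact mul_le_mul_of_nonneg_left (sum_inv_sq_le hp.1 hp.2) (by positivity)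
      _ = 8*(N:ℝ)^2 * (harmonic (N-1) : ℝ) := by
          rw [← sum_inv_eq_harmonic (by omega), Finset.mul_sum]
          refine Finset.sum_congr rfl fun p hp => ?_
          rw [div_eq_mul_inv]
          ring
      _ ≤ 8*(N:ℝ)^2 * (2 * Real.log N) := by
          apply mul_le_mul_of_nonneg_left hH2 (by positivity)
      _ = 16 * (N:ℝ)^2 * Real.log N := by ring
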